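/- Let λ > 0, P_Rx > 0, κ > 0, α > 0, and p ≥ 0. Let ζ = 10/ln(10), μ ∈ ℝ, σ > 0, and let f_χ(w) = (ζ/(w σ √(2π))) · exp(−(10·log₁₀(w) − μ)²/(2σ²)) for w > 0. Then λ · ∫₀^∞ vol₂({x ∈ ℝ² : P_Rx·κ·‖x‖^α / w ≤ p}) · f_χ(w) dw = λ · π · (p/(κ·P_Rx))^{2/α} · Υ_χ, where vol₂ denotes two-dimensional Lebesgue measure and Υ_χ = exp((2/α)·μ/ζ + (1/2)·((2/α)/ζ)²·σ²). -/

import Mathlib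

open MeasureTheory

lemma mgf_aux (σ ζ μ s : ℝ) (hσ : 0 < σ) (hζ : 0 < ζ) :
    ∫ u : ℝ, Real.exp (u * s) * Real.exp (-(ζ*u - μ)^2 / (2*σ^2)) =
      σ * Real.sqrt (2*Real.pi) / ζ * Real.exp (s*μ/ζ + s^2*σ^2/(2*ζ^2)) := by
  have hζ' : ζ ≠ 0 := ne_of_gt hζ
  have hσ' : σ ≠ 0 := ne_of_gt hσ
  have hb : 0 < ζ^2/(2*σ^2) := by positivity
  have key : ∀ u : ℝ, Real.exp (u*s) * Real.exp (-(ζ*u - μ)^2 / (2*σ^2))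
      = Real.exp (s*μ/ζ + s^2*σ^2/(2*ζ^2)) *
        Real.exp (-(ζ^2/(2*σ^2))*(u - (μ/ζ + s*σ^2/ζ^2))^2) := by
    intro u
    rw [← Real.exp_add, ← Real.exp_add]
    congr 1
    field_simp
    ring
  simp_rw [key]
  rw [integral_const_mul]
  have htr : ∫ u : ℝ, Real.exp (-(ζ^2/(2*σ^2))*(u - (μ/ζ + s*σ^2/ζ^2))^2)
      = ∫ u : ℝ, Real.exp (-(ζ^2/(2*σ^2))*u^2) :=
    MeasureTheory.integral_sub_right_eq_self (fun u => Real.exp (-(ζ^2/(2*σ^2))*u^2)) _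
  rw [htr, integral_gaussian]
  have hsq : Real.pi / (ζ^2/(2*σ^2)) = (σ * Real.sqrt (2*Real.pi) / ζ)^2 := by
    have h2 : Real.sqrt (2*Real.pi) ^ 2 = 2*Real.pi := Real.sq_sqrt (by positivity)
    rw [div_pow, mul_pow, h2]
    field_simp
  rw [hsq, Real.sqrt_sq (by positivity)]
  ring

/-- Eq. (14), Appendix A of the paper: intensity of required powers.
With log-normal shadowing density `f` and path-loss `κ r^α`, the mean measure of base
stations whose required transmit power (to satisfy the received power constraint
`P_Rx`) is at most `p` equals `λ π (p/(κ P_Rx))^{2/α} Υ_χ`. -/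
theorem stmt_7 (lam PRx κ α p : ℝ)
    (hlam : 0 < lam) (hPRx : 0 < PRx) (hκ : 0 < κ) (hα : 0 < α) (hp : 0 ≤ p)
    (ζ μ σ : ℝ) (hζ : ζ = 10 / Real.log 10) (hσ : 0 < σ)
    (f : ℝ → ℝ)
    (hf : ∀ w : ℝ, 0 < w →
      f w = ζ / (w * σ * Real.sqrt (2 * Real.pi)) *
        Real.exp (-(10 * Real.logb 10 w - μ) ^ 2 / (2 * σ ^ 2))) :
    lam * ∫ w in Set.Ioi (0 : ℝ),
        (volume {x : EuclideanSpace ℝ (Fin 2) | PRx * (κ * ‖x‖ ^ α) / w ≤ p}).toReal * f w =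
      lam * (Real.pi * (p / (κ * PRx)) ^ (2 / α) *
        Real.exp ((2 / α) * μ / ζ + (1 / 2) * ((2 / α) / ζ) ^ 2 * σ ^ 2)) := by
  have hlog10 : 0 < Real.log 10 := Real.log_pos (by norm_num)
  have hζpos : 0 < ζ := by rw [hζ]; positivity
  have hζ' : ζ ≠ 0 := ne_of_gt hζpos
  set C : ℝ := (p / (κ * PRx)) ^ (2/α) with hC_def
  have hCnn : 0 ≤ C := Real.rpow_nonneg (by positivity) _
  -- Step 1: volume of the set
  have hvol : ∀ w : ℝ, w ∈ Set.Ioi (0:ℝ) →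
      (volume {x : EuclideanSpace ℝ (Fin 2) | PRx * (κ * ‖x‖ ^ α) / w ≤ p}).toReal * f w
        = (Real.pi * (C * w ^ (2/α))) * f w := by
    intro w hw
    rw [Set.mem_Ioi] at hw
    have hPκ : 0 < PRx * κ := by positivity
    have hset : {x : EuclideanSpace ℝ (Fin 2) | PRx * (κ * ‖x‖ ^ α) / w ≤ p}
        = Metric.closedBall 0 ((p/(κ*PRx)*w) ^ (α⁻¹)) := by
      ext x
      simp only [Set.mem_setOf_eq, Metric.mem_closedBall, dist_zero_right]
      rw [div_le_iff₀ hw, show PRx * (κ * ‖x‖ ^ α) = ‖x‖ ^ α * (PRx * κ) by ring,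
        ← le_div_iff₀ hPκ, show p * w / (PRx * κ) = p/(κ*PRx)*w by ring,
        ← Real.le_rpow_inv_iff_of_pos (norm_nonneg x) (by positivity) hα]
    have hr : (0:ℝ) ≤ (p/(κ*PRx)*w) ^ (α⁻¹) := Real.rpow_nonneg (by positivity) _
    have hpow : ((p/(κ*PRx)*w) ^ (α⁻¹)) ^ (2:ℕ) = C * w ^ (2/α) := by
      rw [← Real.rpow_natCast (((p/(κ*PRx)*w) ^ (α⁻¹))) 2, ← Real.rpow_mul (by positivity),
        show α⁻¹ * (2:ℕ) = 2/α by push_cast; ring,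
        Real.mul_rpow (by positivity) (le_of_lt hw), hC_def]
    have hv : (volume {x : EuclideanSpace ℝ (Fin 2) | PRx * (κ * ‖x‖ ^ α) / w ≤ p}).toReal
        = Real.pi * (C * w ^ (2/α)) := by
      rw [hset, EuclideanSpace.volume_closedBall]
      simp only [Fintype.card_fin]
      rw [← ENNReal.ofReal_pow hr, ← ENNReal.ofReal_mul (by positivity),
        ENNReal.toReal_ofReal (by positivity), hpow]
      norm_num [Real.Gamma_two, Real.sq_sqrt Real.pi_nonneg]
      ring
    rw [hv]
  -- Step 2: substitution w = exp u
  have hA : ∫ w in Set.Ioi (0 : ℝ),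
      (volume {x : EuclideanSpace ℝ (Fin 2) | PRx * (κ * ‖x‖ ^ α) / w ≤ p}).toReal * f w
      = ∫ w in Set.Ioi (0:ℝ), (Real.pi * (C * w ^ (2/α))) * f w :=
    setIntegral_congr_fun measurableSet_Ioi hvol
  have hB : ∫ w in Set.Ioi (0:ℝ), (Real.pi * (C * w ^ (2/α))) * f w
      = ∫ u : ℝ, |Real.exp u| • ((Real.pi * (C * (Real.exp u) ^ (2/α))) * f (Real.exp u)) := by
    have := integral_image_eq_integral_abs_deriv_smul MeasurableSet.univ
      (fun x _ => (Real.hasDerivAt_exp x).hasDerivWithinAt)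
      (Real.exp_injective.injOn) (fun w => (Real.pi * (C * w ^ (2/α))) * f w)
    rw [Set.image_univ, Real.range_exp] at this
    rw [this, setIntegral_univ]
  -- Step 3: pointwise simplification
  have hC3 : ∀ u : ℝ, |Real.exp u| • ((Real.pi * (C * (Real.exp u) ^ (2/α))) * f (Real.exp u))
      = (Real.pi * C * (ζ/(σ*Real.sqrt (2*Real.pi)))) *
        (Real.exp (u*(2/α)) * Real.exp (-(ζ*u-μ)^2/(2*σ^2))) := by
    intro u
    have hexp : (0:ℝ) < Real.exp u := Real.exp_pos u
    rw [hf _ hexp, smul_eq_mul, abs_of_pos hexp, Real.logb, Real.log_exp,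
      show (10:ℝ) * (u / Real.log 10) = ζ * u by rw [hζ]; ring,
      ← Real.exp_mul]
    have hs : Real.sqrt (2*Real.pi) ≠ 0 := by positivity
    field_simp
  rw [hA, hB]
  simp_rw [hC3]
  rw [integral_const_mul, mgf_aux σ ζ μ (2/α) hσ hζpos]
  have hs : Real.sqrt (2*Real.pi) ≠ 0 := by positivity
  have hσ' : σ ≠ 0 := ne_of_gt hσ
  rw [show (2/α)*μ/ζ + (2/α)^2*σ^2/(2*ζ^2)
      = (2 / α) * μ / ζ + (1 / 2) * ((2 / α) / ζ) ^ 2 * σ ^ 2 by field_simp]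
  field_simp
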